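/- Let s : ℕ → ℕ with s n ≥ 1 for all n and ℓ : ℕ → ℝ with ℓ n > 0 for all n. If lim_{n→∞} (Σ_{k=0}^n s_k s_{k+1} ℓ_k)·(Σ_{k=n}^∞ ℓ_k/(s_k s_{k+1})) = 0, where the tail sums and the products are taken in [0,∞], then ℓ_n → 0 as n → ∞ and Σ_{k=0}^∞ ℓ_k/(s_k s_{k+1}) < ∞. -/

import Mathlib

open Filter Topology
open scoped ENNReal

/-- Remark 5.4.  If
`(Σ_{k ≤ n} sₖ sₖ₊₁ ℓₖ)(Σ_{k ≥ n} ℓₖ/(sₖ sₖ₊₁)) → 0` (in `[0,∞]`), then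
`ℓₙ → 0` and `Σ_k ℓₖ/(sₖ sₖ₊₁) < ∞`. -/
theorem discreteness_condition_consequences (s : ℕ → ℕ) (hs : ∀ n, 1 ≤ s n)
    (ℓ : ℕ → ℝ) (hℓ : ∀ n, 0 < ℓ n)
    (h : Tendsto
      (fun n : ℕ =>
        (∑ k ∈ Finset.range (n + 1), ENNReal.ofReal ((s k : ℝ) * (s (k + 1) : ℝ) * ℓ k)) *
          (∑' k : ℕ, ENNReal.ofReal (ℓ (n + k) / ((s (n + k) : ℝ) * (s (n + k + 1) : ℝ)))))
      atTop (𝓝 0)) :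
    Tendsto ℓ atTop (𝓝 0) ∧
      (∑' k : ℕ, ENNReal.ofReal (ℓ k / ((s k : ℝ) * (s (k + 1) : ℝ)))) < ∞ := by
  have hspos : ∀ k, (0 : ℝ) < (s k : ℝ) := fun k => by
    have := hs k; positivity
  set P : ℕ → ℝ≥0∞ := fun n =>
    (∑ k ∈ Finset.range (n + 1), ENNReal.ofReal ((s k : ℝ) * (s (k + 1) : ℝ) * ℓ k)) *
      (∑' k : ℕ, ENNReal.ofReal (ℓ (n + k) / ((s (n + k) : ℝ) * (s (n + k + 1) : ℝ)))) with hP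
  -- key pointwise lower bound : ℓ n ^ 2 ≤ P n
  have key : ∀ n, ENNReal.ofReal (ℓ n ^ 2) ≤ P n := by
    intro n
    have h1 : ENNReal.ofReal ((s n : ℝ) * (s (n + 1) : ℝ) * ℓ n) ≤
        ∑ k ∈ Finset.range (n + 1), ENNReal.ofReal ((s k : ℝ) * (s (k + 1) : ℝ) * ℓ k) :=
      Finset.single_le_sum (f := fun k => ENNReal.ofReal ((s k : ℝ) * (s (k + 1) : ℝ) * ℓ k))
        (fun k _ => zero_le) (Finset.self_mem_range_succ n)
    have h2 : ENNReal.ofReal (ℓ (n + 0) / ((s (n + 0) : ℝ) * (s (n + 0 + 1) : ℝ))) ≤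
        ∑' k : ℕ, ENNReal.ofReal (ℓ (n + k) / ((s (n + k) : ℝ) * (s (n + k + 1) : ℝ))) :=
      ENNReal.le_tsum 0
    have hmul := mul_le_mul' h1 h2
    refine le_trans (le_of_eq ?_) hmul
    rw [← ENNReal.ofReal_mul (by have := hℓ n; have := hspos n; have := hspos (n+1); positivity)]
    congr 1
    have hn1 := hspos n
    have hn2 := hspos (n + 1)
    field_simp
    ring_nf
    rw [mul_assoc, mul_inv_cancel₀ hn1.ne', mul_one]
  -- eventually P n < 1 (in particular finite)
  have hev : ∀ᶠ n in atTop, P n < 1 := h.eventually (gt_mem_nhds (by norm_num))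
  constructor
  · -- ℓ → 0
    have h0 : Tendsto (fun n => (P n).toReal) atTop (𝓝 0) := by
      simpa [Function.comp_def] using (ENNReal.tendsto_toReal (by simp)).comp h
    have hb : ∀ᶠ n in atTop, ℓ n ^ 2 ≤ (P n).toReal := by
      filter_upwards [hev] with n hn
      have h1 : (ENNReal.ofReal (ℓ n ^ 2)).toReal ≤ (P n).toReal :=
        ENNReal.toReal_mono (hn.trans (by norm_num)).ne (key n)
      rwa [ENNReal.toReal_ofReal (by positivity)] at h1
    have hsq : Tendsto (fun n => ℓ n ^ 2) atTop (𝓝 0) :=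
      squeeze_zero' (Eventually.of_forall fun n => by positivity) hb h0
    have hsqrt := (Real.continuous_sqrt.tendsto 0).comp hsq
    simp only [Function.comp, Real.sqrt_zero] at hsqrt
    exact hsqrt.congr fun n => Real.sqrt_sq (hℓ n).le
  · -- the full sum is finite
    obtain ⟨N, hN⟩ := hev.exists
    -- the first factor at N is positive
    have hA : (0 : ℝ≥0∞) <
        ∑ k ∈ Finset.range (N + 1), ENNReal.ofReal ((s k : ℝ) * (s (k + 1) : ℝ) * ℓ k) := by
      refine lt_of_lt_of_le ?_
        (Finset.single_le_sum (f := fun k => ENNReal.ofReal ((s k : ℝ) * (s (k + 1) : ℝ) * ℓ k))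
          (fun k _ => zero_le) (Finset.mem_range.mpr (Nat.succ_pos N)))
      exact ENNReal.ofReal_pos.mpr (by have := hspos 0; have := hspos 1; have := hℓ 0; positivity)
    -- hence the tail at N is finite
    have hT : (∑' k : ℕ, ENNReal.ofReal (ℓ (N + k) / ((s (N + k) : ℝ) * (s (N + k + 1) : ℝ)))) ≠ ∞ := by
      intro hTinf
      rw [hP] at hN
      simp only [hTinf, ENNReal.mul_top hA.ne'] at hN
      exact (lt_irrefl _ (hN.trans (by norm_num))).elim
    -- split the full sum
    have hsplit :
        (∑ k ∈ Finset.range N, ENNReal.ofReal (ℓ k / ((s k : ℝ) * (s (k + 1) : ℝ)))) +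
          (∑' k : ℕ, ENNReal.ofReal (ℓ (k + N) / ((s (k + N) : ℝ) * (s (k + N + 1) : ℝ)))) =
        ∑' k : ℕ, ENNReal.ofReal (ℓ k / ((s k : ℝ) * (s (k + 1) : ℝ))) :=
      Summable.sum_add_tsum_nat_add' (f := fun k => ENNReal.ofReal (ℓ k / ((s k : ℝ) * (s (k + 1) : ℝ))))
        ENNReal.summable
    rw [← hsplit]
    refine ENNReal.add_lt_top.mpr ⟨?_, ?_⟩
    · exact ENNReal.sum_lt_top.mpr fun k _ => ENNReal.ofReal_lt_top
    · have : (fun k : ℕ => ENNReal.ofReal (ℓ (k + N) / ((s (k + N) : ℝ) * (s (k + N + 1) : ℝ))))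
          = fun k : ℕ => ENNReal.ofReal (ℓ (N + k) / ((s (N + k) : ℝ) * (s (N + k + 1) : ℝ))) := by
        funext k; rw [Nat.add_comm k N]
      rw [this]
      exact lt_top_iff_ne_top.mpr hT
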